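/- For Hermitian matrices A, B on ℂ^d and t ∈ ℝ, ‖e^{-iAt}e^{-iBt} - e^{-i(A+B)t}‖ ≤ ‖[A,B]‖·t²/2 for all t ≥ 0 (Trotter error bound for two unitaries). -/

import Mathlib

open Matrix

attribute [local instance] Matrix.instL2OpNormedAddCommGroup Matrix.instL2OpNormedSpace
  Matrix.instL2OpNormedRing Matrix.instL2OpNormedAlgebra

attribute [local instance] Matrix.instCStarRing

namespace TrotterAux

open NormedSpace

variable {d : ℕ}

lemma ring_id1 {R : Type*} [Ring R] (g1 g2 X Y : R)
    (e1 : X * g1 = g1 * X) (e2 : g2 * X = X * g2) :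
    X * g1 * (Y * g2) + g1 * (Y * (g2 * -X)) = g1 * ((X * Y - Y * X) * g2) := by
  have e2' : g2 * -X = -X * g2 := by rw [mul_neg, e2, neg_mul]
  rw [e1, e2']
  noncomm_ring

lemma ring_id2 {R : Type*} [Ring R] (e3 g1 eY X Y : R)
    (e1 : (X + Y) * e3 = e3 * (X + Y)) (e2 : eY * Y = Y * eY) :
    -((X + Y) * e3) * (g1 * eY) + e3 * (X * g1 * eY + g1 * (eY * Y)) =
      e3 * ((g1 * Y - Y * g1) * eY) := by
  rw [e1, e2]
  noncomm_ring

/-- Restriction to real parameter of the derivative of the exponential. -/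
lemma hasDerivAt_exp_real (X : Matrix (Fin d) (Fin d) ℂ) (s : ℝ) :
    HasDerivAt (fun u : ℝ => exp ((u : ℂ) • X)) (X * exp ((s : ℂ) • X)) s := by
  have h : HasDerivAt (fun u : ℂ => exp (u • X)) (X * exp ((s : ℂ) • X)) ((s : ℝ) : ℂ) :=
    hasDerivAt_exp_smul_const' X (s : ℂ)
  have := HasDerivAt.scomp (h := fun y : ℝ => (y : ℂ)) s h Complex.ofRealCLM.hasDerivAt
  simp at this
  exact this

lemma hasDerivAt_exp_real' (X : Matrix (Fin d) (Fin d) ℂ) (s : ℝ) :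
    HasDerivAt (fun u : ℝ => exp ((u : ℂ) • X)) (exp ((s : ℂ) • X) * X) s := by
  have h : HasDerivAt (fun u : ℂ => exp (u • X)) (exp ((s : ℂ) • X) * X) ((s : ℝ) : ℂ) :=
    hasDerivAt_exp_smul_const X (s : ℂ)
  have := HasDerivAt.scomp (h := fun y : ℝ => (y : ℂ)) s h Complex.ofRealCLM.hasDerivAt
  simp at this
  exact this

lemma exp_mem_unitary {M : Matrix (Fin d) (Fin d) ℂ} (hM : Mᴴ = -M) :
    exp M ∈ unitary (Matrix (Fin d) (Fin d) ℂ) := by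
  have h1 : exp M * exp (-M) = 1 := by
    rw [← Matrix.exp_add_of_commute _ _ (Commute.neg_right (Commute.refl M))]
    simp
  have h2 : exp (-M) * exp M = 1 := by
    rw [← Matrix.exp_add_of_commute _ _ (Commute.neg_left (Commute.refl M))]
    simp
  have hstar : star (exp M) = exp (-M) := by
    rw [← hM]
    exact (Matrix.exp_conjTranspose M).symm
  exact Unitary.mem_iff.2 ⟨by rw [hstar]; exact h2, by rw [hstar]; exact h1⟩

lemma norm_exp_skew {M : Matrix (Fin d) (Fin d) ℂ} (hM : Mᴴ = -M) :
    ‖exp M‖ ≤ 1 := by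
  rcases Nat.eq_zero_or_pos d with hd | hd
  · subst hd
    have : exp M = 0 := Subsingleton.elim _ _
    simp [this]
  · haveI : Nontrivial (Matrix (Fin d) (Fin d) ℂ) := by
      refine nontrivial_of_ne 1 0 fun h => ?_
      have := congrFun (congrFun h ⟨0, hd⟩) ⟨0, hd⟩
      simp [Matrix.one_apply_eq] at this
    exact le_of_eq (CStarRing.norm_of_mem_unitary (exp_mem_unitary hM))

lemma smul_skew {M : Matrix (Fin d) (Fin d) ℂ} (hM : Mᴴ = -M) (s : ℝ) :
    ((s : ℂ) • M)ᴴ = -((s : ℂ) • M) := by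
  rw [Matrix.conjTranspose_smul, hM, Complex.star_def, Complex.conj_ofReal, smul_neg]

/-- key commutator growth bound: `‖e^{sX} Y - Y e^{sX}‖ ≤ ‖[X,Y]‖ s`. -/
lemma comm_bound (X Y : Matrix (Fin d) (Fin d) ℂ) (hX : Xᴴ = -X) {s : ℝ} (hs : 0 ≤ s) :
    ‖exp ((s : ℂ) • X) * Y - Y * exp ((s : ℂ) • X)‖ ≤ ‖X * Y - Y * X‖ * s := by
  set g1 : ℝ → Matrix (Fin d) (Fin d) ℂ := fun u => exp ((u : ℂ) • X) with hg1
  set g2 : ℝ → Matrix (Fin d) (Fin d) ℂ := fun u => exp ((u : ℂ) • (-X)) with hg2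
  set D : ℝ → Matrix (Fin d) (Fin d) ℂ := fun u => g1 u * (Y * g2 u) with hD
  have hcomm1 : ∀ u : ℝ, X * g1 u = g1 u * X := fun u =>
    (((Commute.refl X).smul_right ((u : ℂ))).exp_right).eq
  have hcomm2 : ∀ u : ℝ, g2 u * X = X * g2 u := fun u =>
    ((((Commute.refl X).neg_right).smul_right ((u : ℂ))).exp_right).symm.eq
  have hDderiv : ∀ u : ℝ, HasDerivAt D (g1 u * ((X * Y - Y * X) * g2 u)) u := by
    intro u
    have h1 := hasDerivAt_exp_real X u
    have h2 := (hasDerivAt_exp_real' (-X) u).const_mul Y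
    have h := h1.mul h2
    refine h.congr_deriv (Eq.symm ?_)
    exact (ring_id1 (g1 u) (g2 u) X Y (hcomm1 u) (hcomm2 u)).symm
  have hbound : ∀ u ∈ Set.Icc (0 : ℝ) s,
      ‖g1 u * ((X * Y - Y * X) * g2 u)‖ ≤ ‖X * Y - Y * X‖ := by
    intro u hu
    have n1 : ‖g1 u‖ ≤ 1 := norm_exp_skew (smul_skew hX u)
    have n2 : ‖g2 u‖ ≤ 1 := by
      refine norm_exp_skew (smul_skew ?_ u)
      rw [Matrix.conjTranspose_neg, hX, neg_neg]
    calc ‖g1 u * ((X * Y - Y * X) * g2 u)‖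
        ≤ ‖g1 u‖ * (‖X * Y - Y * X‖ * ‖g2 u‖) :=
          le_trans (norm_mul_le _ _) (by gcongr; exact norm_mul_le _ _)
      _ ≤ 1 * (‖X * Y - Y * X‖ * 1) := by gcongr
      _ = ‖X * Y - Y * X‖ := by ring
  have key : ‖D s - D 0‖ ≤ ‖X * Y - Y * X‖ * ‖s - 0‖ := by
    exact (convex_Icc (0 : ℝ) s).norm_image_sub_le_of_norm_hasDerivWithin_le
      (fun u _ => (hDderiv u).hasDerivWithinAt) hbound
      (Set.left_mem_Icc.2 hs) (Set.right_mem_Icc.2 hs)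
  have hD0 : D 0 = Y := by simp [hD, hg1, hg2]
  have hg2g1 : g2 s * g1 s = 1 := by
    rw [hg1, hg2, ← Matrix.exp_add_of_commute]
    · simp
    · exact ((Commute.refl X).neg_left.smul_left ((s : ℂ))).smul_right ((s : ℂ))
  have hfactor : g1 s * Y - Y * g1 s = (D s - D 0) * g1 s := by
    rw [hD0, hD]
    have : g1 s * Y = g1 s * (Y * (g2 s * g1 s)) := by rw [hg2g1, mul_one]
    rw [this]
    noncomm_ring
  have n1 : ‖g1 s‖ ≤ 1 := norm_exp_skew (smul_skew hX s)
  calc ‖g1 s * Y - Y * g1 s‖ = ‖(D s - D 0) * g1 s‖ := by rw [hfactor]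
    _ ≤ ‖D s - D 0‖ * ‖g1 s‖ := norm_mul_le _ _
    _ ≤ (‖X * Y - Y * X‖ * ‖s - 0‖) * 1 := by gcongr
    _ = ‖X * Y - Y * X‖ * s := by rw [mul_one, sub_zero, Real.norm_of_nonneg hs]

lemma trotter_aux (X Y : Matrix (Fin d) (Fin d) ℂ) (hX : Xᴴ = -X) (hY : Yᴴ = -Y)
    (t : ℝ) (ht : 0 ≤ t) :
    ‖exp ((t : ℂ) • X) * exp ((t : ℂ) • Y) - exp ((t : ℂ) • (X + Y))‖ ≤
      ‖X * Y - Y * X‖ * t ^ 2 / 2 := by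
  obtain ⟨K, hKnn, hK⟩ : ∃ K, 0 ≤ K ∧ ‖X * Y - Y * X‖ = K := ⟨_, norm_nonneg _, rfl⟩
  rw [hK]
  set Z := X + Y with hZ
  have hZskew : Zᴴ = -Z := by rw [hZ, Matrix.conjTranspose_add, hX, hY]; abel
  set g1 : ℝ → Matrix (Fin d) (Fin d) ℂ := fun u => exp ((u : ℂ) • X) with hg1
  set eY : ℝ → Matrix (Fin d) (Fin d) ℂ := fun u => exp ((u : ℂ) • Y) with heY
  set e3 : ℝ → Matrix (Fin d) (Fin d) ℂ := fun u => exp (((t - u : ℝ) : ℂ) • Z) with he3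
  set h : ℝ → Matrix (Fin d) (Fin d) ℂ := fun u => e3 u * (g1 u * eY u) with hh
  -- derivative of e3
  have he3deriv : ∀ u : ℝ, HasDerivAt e3 (-(Z * e3 u)) u := by
    intro u
    have hout := hasDerivAt_exp_real Z (t - u)
    have hin : HasDerivAt (fun v : ℝ => t - v) (-1 : ℝ) u := by
      simpa using (hasDerivAt_id u).const_sub t
    have := HasDerivAt.scomp (h := fun v : ℝ => t - v) u hout hin
    simp only [Function.comp_def, neg_smul, one_smul] at this
    exact this
  have hcommZ : ∀ u : ℝ, Z * e3 u = e3 u * Z := fun u =>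
    (((Commute.refl Z).smul_right (((t - u : ℝ) : ℂ))).exp_right).eq
  have hcommY : ∀ u : ℝ, eY u * Y = Y * eY u := fun u =>
    ((((Commute.refl Y)).smul_right ((u : ℂ))).exp_right).symm.eq
  have hderiv : ∀ u : ℝ, HasDerivAt h (e3 u * ((g1 u * Y - Y * g1 u) * eY u)) u := by
    intro u
    have hp := (hasDerivAt_exp_real X u).mul (hasDerivAt_exp_real' Y u)
    have hhd := (he3deriv u).mul hp
    refine hhd.congr_deriv (Eq.symm ?_)
    have e1 : (X + Y) * e3 u = e3 u * (X + Y) := by rw [← hZ]; exact hcommZ u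
    have := ring_id2 (e3 u) (g1 u) (eY u) X Y e1 (hcommY u)
    rw [← hZ] at this
    exact this.symm
  have hbound : ∀ u ∈ Set.Ico (0 : ℝ) t,
      ‖e3 u * ((g1 u * Y - Y * g1 u) * eY u)‖ ≤ K * u := by
    intro u hu
    have n3 : ‖e3 u‖ ≤ 1 := norm_exp_skew (smul_skew hZskew (t - u))
    have nY : ‖eY u‖ ≤ 1 := norm_exp_skew (smul_skew hY u)
    have hc : ‖g1 u * Y - Y * g1 u‖ ≤ K * u := hK ▸ comm_bound X Y hX hu.1
    calc ‖e3 u * ((g1 u * Y - Y * g1 u) * eY u)‖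
        ≤ ‖e3 u‖ * (‖g1 u * Y - Y * g1 u‖ * ‖eY u‖) :=
          le_trans (norm_mul_le _ _)
            (mul_le_mul_of_nonneg_left (norm_mul_le _ _) (norm_nonneg _))
      _ ≤ 1 * (K * u * 1) :=
          mul_le_mul n3
            (mul_le_mul hc nY (norm_nonneg _) (mul_nonneg hKnn hu.1))
            (mul_nonneg (norm_nonneg _) (norm_nonneg _)) one_pos.le
      _ = K * u := by rw [one_mul, mul_one]
  -- fencing lemma
  have hmain : ∀ x ∈ Set.Icc (0 : ℝ) t, ‖h x - h 0‖ ≤ K * x ^ 2 / 2 := by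
    have hBderiv : ∀ x : ℝ, HasDerivAt (fun x : ℝ => K * x ^ 2 / 2) (K * x) x := by
      intro x
      have := ((hasDerivAt_pow 2 x).const_mul K).div_const 2
      refine this.congr_deriv (Eq.symm ?_)
      ring
    refine image_norm_le_of_norm_deriv_right_le_deriv_boundary
      (f := fun x => h x - h 0) (f' := fun x => e3 x * ((g1 x * Y - Y * g1 x) * eY x))
      ?_ ?_ ?_ hBderiv ?_
    · intro x hx
      exact (((hderiv x).sub_const (h 0)).continuousAt.continuousWithinAt)
    · intro x hx
      exact ((hderiv x).sub_const (h 0)).hasDerivWithinAt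
    · simp
    · exact hbound
  have hfinal := hmain t (Set.right_mem_Icc.2 ht)
  have hht : h t = g1 t * eY t := by simp [hh, he3]
  have hh0 : h 0 = exp ((t : ℂ) • Z) := by simp [hh, he3, hg1, heY]
  rw [hht, hh0] at hfinal
  calc ‖exp ((t : ℂ) • X) * exp ((t : ℂ) • Y) - exp ((t : ℂ) • (X + Y))‖
      = ‖g1 t * eY t - exp ((t : ℂ) • Z)‖ := rfl
    _ ≤ K * t ^ 2 / 2 := hfinal

end TrotterAux

/-- Trotter error bound for two unitaries: for Hermitian `A`, `B` and `t ≥ 0`,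
`‖e^{-iAt}e^{-iBt} - e^{-i(A+B)t}‖ ≤ ‖[A,B]‖ t²/2`. -/
theorem trotter_error_bound {d : ℕ} (A B : Matrix (Fin d) (Fin d) ℂ)
    (hA : A.IsHermitian) (hB : B.IsHermitian) (t : ℝ) (ht : 0 ≤ t) :
    ‖NormedSpace.exp ((-Complex.I * (t : ℝ)) • A) *
        NormedSpace.exp ((-Complex.I * (t : ℝ)) • B) -
      NormedSpace.exp ((-Complex.I * (t : ℝ)) • (A + B))‖ ≤ ‖⁅A, B⁆‖ * t ^ 2 / 2 := by
  set X := (-Complex.I) • A with hXdef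
  set Y := (-Complex.I) • B with hYdef
  have hX : Xᴴ = -X := by
    rw [hXdef, Matrix.conjTranspose_smul, hA.eq]
    simp [Complex.star_def]
  have hY : Yᴴ = -Y := by
    rw [hYdef, Matrix.conjTranspose_smul, hB.eq]
    simp [Complex.star_def]
  have hsmul : ∀ M : Matrix (Fin d) (Fin d) ℂ,
      (-Complex.I * (t : ℝ)) • M = (t : ℂ) • ((-Complex.I) • M) := by
    intro M
    rw [smul_smul, mul_comm]
  have hXY : X + Y = (-Complex.I) • (A + B) := by rw [hXdef, hYdef, smul_add]
  have hcomm : ‖X * Y - Y * X‖ = ‖⁅A, B⁆‖ := by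
    have : X * Y - Y * X = -(A * B - B * A) := by
      rw [hXdef, hYdef]
      simp only [Matrix.smul_mul, Matrix.mul_smul, smul_smul]
      rw [neg_mul_neg, Complex.I_mul_I]
      simp [neg_smul, sub_eq_add_neg]
      abel
    rw [this, norm_neg, Ring.lie_def]
  have := TrotterAux.trotter_aux X Y hX hY t ht
  rw [hcomm] at this
  rw [hsmul A, hsmul B, hsmul (A + B), ← hXY]
  exact this
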